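/- Let f̂ ≥ 1 be an integer, set f = 5·f̂ + 2, and let q̂₀, q̂₁, q̂₅ be positive real numbers; set q₄ = q̂₁^(−1/5), q₅ = q̂₁^(−3/5)·q̂₅, q₀ = q̂₁^(1/5)·q̂₀. Then the (unordered, possibly divergent) complex tsum over the index set S = {(m₀, m₄, m₅) ∈ ℤ³ : m₀ ≥ 1, m₄, m₅ ≥ 0, 5 ∣ (m₀ − m₄ − 3m₅), m₀ − m₄ − 3m₅ ≥ 0} of the orbifold superpotential terms T(m₀, m₄, m₅) = exp(iπ·(⌊(−2m₄ − m₅)/5⌋ + m₀·(1 − (f+1)/5))) · q₀^(m₀) q₄^(m₄) q₅^(m₅) · Γ((f+1)m₀/5 + (2/5)m₄ + (1/5)m₅) / [ (m₀/5) Γ(1 + (m₀ − m₄ − 3m₅)/5) Γ(1 + m₄) Γ(1 + m₅) Γ(1 + (f/5)m₀ − (2/5)m₄ − (1/5)m₅) ] equals 5 times the tsum over Ŝ = {(m̂₀, m̂₁, m̂₅) ∈ ℤ³ : m̂₀ ≥ 1, m̂₁, m̂₅ ≥ 0, m̂₀ − 5m̂₁ − 3m̂₅ ≥ 0} of the resolution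 superpotential terms T̂(m̂₀, m̂₁, m̂₅) = exp(iπ·(2m̂₁ + m̂₅ + (f̂ + 2/5)m̂₀ + ⌊−2m̂₀/5⌋)) · q̂₀^(m̂₀) q̂₁^(m̂₁) q̂₅^(m̂₅) · Γ((f̂+1)m̂₀ − 2m̂₁ − m̂₅) / [ m̂₀ Γ(1 + m̂₀ − 5m̂₁ − 3m̂₅) Γ(1 + m̂₁) Γ(1 + m̂₅) Γ(1 + f̂m̂₀ + 2m̂₁ + m̂₅) ]. That is, W_f^{X,L}(q(q̂), q₀(q̂, q̂₀)) = 5·W_f̂^{X̂,L̂}(q̂, q̂₀). -/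
import Mathlib


open Real Complex

/-- The index set of the orbifold superpotential series: triples `(m₀, m₄, m₅)` with
`m₀ ≥ 1`, `m₄, m₅ ≥ 0`, `5 ∣ m₀ − m₄ − 3m₅` and `m₀ − m₄ − 3m₅ ≥ 0`. -/
def orbIndexSet : Set (ℤ × ℤ × ℤ) :=
  {p | 1 ≤ p.1 ∧ 0 ≤ p.2.1 ∧ 0 ≤ p.2.2 ∧ (5 : ℤ) ∣ (p.1 - p.2.1 - 3 * p.2.2) ∧
    0 ≤ p.1 - p.2.1 - 3 * p.2.2}

/-- The index set of the resolution superpotential series: triples `(m̂₀, m̂₁, m̂₅)` with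
`m̂₀ ≥ 1`, `m̂₁, m̂₅ ≥ 0` and `m̂₀ − 5m̂₁ − 3m̂₅ ≥ 0`. -/
def resIndexSet : Set (ℤ × ℤ × ℤ) :=
  {p | 1 ≤ p.1 ∧ 0 ≤ p.2.1 ∧ 0 ≤ p.2.2 ∧ 0 ≤ p.1 - 5 * p.2.1 - 3 * p.2.2}

/-- The general term of the orbifold superpotential series `W_f^{X,L}` for
`X = [ℂ³/ℤ₅(1,1,3)]` at framing `f`, with Kähler parameters `q₀, q₄, q₅` (positive reals)
and indices `(m₀, m₄, m₅)`.  Here `(−1)^x` is interpreted as `exp(iπ·x)` and `Γ` is the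
complex Gamma function. -/
noncomputable def orbSuperTerm (f : ℤ) (q0 q4 q5 : ℝ) (m0 m4 m5 : ℤ) : ℂ :=
  Complex.exp ((Real.pi : ℂ) * Complex.I *
      ((⌊((-2 * m4 - m5 : ℤ) : ℚ) / 5⌋ : ℂ) + (m0 : ℂ) * (1 - ((f : ℂ) + 1) / 5))) *
    ((q0 ^ m0 * q4 ^ m4 * q5 ^ m5 : ℝ) : ℂ) *
    Complex.Gamma (((f : ℂ) + 1) * m0 / 5 + 2 / 5 * m4 + 1 / 5 * m5) /
    ((m0 : ℂ) / 5 * Complex.Gamma (1 + ((m0 : ℂ) - m4 - 3 * m5) / 5) *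
      Complex.Gamma (1 + (m4 : ℂ)) * Complex.Gamma (1 + (m5 : ℂ)) *
      Complex.Gamma (1 + (f : ℂ) / 5 * m0 - 2 / 5 * m4 - 1 / 5 * m5))

/-- The general term of the resolution superpotential series `W_f̂^{X̂,L̂}` for the toric
crepant resolution of `[ℂ³/ℤ₅(1,1,3)]` at framing `f̂`, with Kähler parameters
`q̂₀, q̂₁, q̂₅` (positive reals) and indices `(m̂₀, m̂₁, m̂₅)`. -/
noncomputable def resSuperTerm (fh : ℤ) (qh0 qh1 qh5 : ℝ) (m0 m1 m5 : ℤ) : ℂ :=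
  Complex.exp ((Real.pi : ℂ) * Complex.I *
      ((2 * m1 + m5 : ℂ) + ((fh : ℂ) + 2 / 5) * m0 + (⌊((-2 * m0 : ℤ) : ℚ) / 5⌋ : ℂ))) *
    ((qh0 ^ m0 * qh1 ^ m1 * qh5 ^ m5 : ℝ) : ℂ) *
    Complex.Gamma (((fh : ℂ) + 1) * m0 - 2 * m1 - m5) /
    ((m0 : ℂ) * Complex.Gamma (1 + (m0 : ℂ) - 5 * m1 - 3 * m5) *
      Complex.Gamma (1 + (m1 : ℂ)) * Complex.Gamma (1 + (m5 : ℂ)) *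
      Complex.Gamma (1 + (fh : ℂ) * m0 + 2 * m1 + m5))


/-- The bijection between the resolution and orbifold index sets:
`(m̂₀, m̂₁, m̂₅) ↦ (m₀, m₄, m₅) = (m̂₀, m̂₀ − 5m̂₁ − 3m̂₅, m̂₅)`. -/
def mckayEquiv : resIndexSet ≃ orbIndexSet where
  toFun p := ⟨(p.1.1, p.1.1 - 5 * p.1.2.1 - 3 * p.1.2.2, p.1.2.2), by
    have h := p.2
    simp only [resIndexSet, Set.mem_setOf_eq] at h
    simp only [orbIndexSet, Set.mem_setOf_eq]
    exact ⟨h.1, by omega, h.2.2.1, by omega, by omega⟩⟩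
  invFun p := ⟨(p.1.1, (p.1.1 - p.1.2.1 - 3 * p.1.2.2) / 5, p.1.2.2), by
    have h := p.2
    simp only [orbIndexSet, Set.mem_setOf_eq] at h
    simp only [resIndexSet, Set.mem_setOf_eq]
    exact ⟨h.1, by omega, h.2.2.1, by omega⟩⟩
  left_inv p := by
    have h := p.2
    simp only [resIndexSet, Set.mem_setOf_eq] at h
    apply Subtype.ext
    simp only
    refine Prod.ext rfl (Prod.ext ?_ rfl)
    simp only
    omega
  right_inv p := by
    have h := p.2
    simp only [orbIndexSet, Set.mem_setOf_eq] at h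
    apply Subtype.ext
    simp only
    refine Prod.ext rfl (Prod.ext ?_ rfl)
    simp only
    omega

/-- Termwise form of the quantum McKay correspondence. -/
lemma orbSuperTerm_eq_five_mul_resSuperTerm (fh m0 m1 m5 : ℤ) (qh0 qh1 qh5 : ℝ)
    (h1 : 0 < qh1) :
    orbSuperTerm (5 * fh + 2) (qh1 ^ ((1 : ℝ) / 5) * qh0) (qh1 ^ (-(1 : ℝ) / 5))
      (qh1 ^ (-(3 : ℝ) / 5) * qh5) m0 (m0 - 5 * m1 - 3 * m5) m5
      = 5 * resSuperTerm fh qh0 qh1 qh5 m0 m1 m5 := by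
  unfold orbSuperTerm resSuperTerm
  -- floor identity
  have hfloor : (⌊((-2 * (m0 - 5 * m1 - 3 * m5) - m5 : ℤ) : ℚ) / 5⌋ : ℤ)
      = ⌊((-2 * m0 : ℤ) : ℚ) / 5⌋ + (2 * m1 + m5) := by
    have h : ((-2 * (m0 - 5 * m1 - 3 * m5) - m5 : ℤ) : ℚ) / 5
        = ((-2 * m0 : ℤ) : ℚ) / 5 + ((2 * m1 + m5 : ℤ) : ℚ) := by push_cast; ring
    rw [h, Int.floor_add_intCast]
  -- exponential factor
  have hexp : Complex.exp ((Real.pi : ℂ) * Complex.I *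
      ((⌊((-2 * (m0 - 5 * m1 - 3 * m5) - m5 : ℤ) : ℚ) / 5⌋ : ℂ) +
        (m0 : ℂ) * (1 - (((5 * fh + 2 : ℤ) : ℂ) + 1) / 5)))
      = Complex.exp ((Real.pi : ℂ) * Complex.I *
      ((2 * m1 + m5 : ℂ) + ((fh : ℂ) + 2 / 5) * m0 + (⌊((-2 * m0 : ℤ) : ℚ) / 5⌋ : ℂ))) := by
    have harg : (Real.pi : ℂ) * Complex.I *
        ((⌊((-2 * (m0 - 5 * m1 - 3 * m5) - m5 : ℤ) : ℚ) / 5⌋ : ℂ) +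
          (m0 : ℂ) * (1 - (((5 * fh + 2 : ℤ) : ℂ) + 1) / 5))
        = (Real.pi : ℂ) * Complex.I *
          ((2 * m1 + m5 : ℂ) + ((fh : ℂ) + 2 / 5) * m0 + (⌊((-2 * m0 : ℤ) : ℚ) / 5⌋ : ℂ))
          + ((-fh * m0 : ℤ) : ℂ) * (2 * (Real.pi : ℂ) * Complex.I) := by
      rw [hfloor]; push_cast; ring
    rw [harg, Complex.exp_add, Complex.exp_int_mul_two_pi_mul_I, mul_one]
  rw [hexp]
  -- Kähler parameter factor
  have hrp : ∀ (r : ℝ) (n : ℤ), (qh1 ^ r) ^ n = qh1 ^ (r * (n : ℝ)) := by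
    intro r n
    rw [Real.rpow_mul h1.le, Real.rpow_intCast]
  have hQ : (qh1 ^ ((1 : ℝ) / 5) * qh0) ^ m0 * (qh1 ^ (-(1 : ℝ) / 5)) ^ (m0 - 5 * m1 - 3 * m5) *
      (qh1 ^ (-(3 : ℝ) / 5) * qh5) ^ m5 = qh0 ^ m0 * qh1 ^ m1 * qh5 ^ m5 := by
    rw [mul_zpow, mul_zpow, hrp, hrp, hrp]
    have hcomb : qh1 ^ (((1 : ℝ) / 5) * (m0 : ℝ)) *
        qh1 ^ ((-(1 : ℝ) / 5) * ((m0 - 5 * m1 - 3 * m5 : ℤ) : ℝ)) *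
        qh1 ^ ((-(3 : ℝ) / 5) * (m5 : ℝ)) = qh1 ^ m1 := by
      rw [← Real.rpow_add h1, ← Real.rpow_add h1, ← Real.rpow_intCast qh1 m1]
      congr 1; push_cast; ring
    linear_combination (qh0 ^ m0 * qh5 ^ m5) * hcomb
  rw [hQ]
  -- Gamma arguments
  rw [show (((5 * fh + 2 : ℤ) : ℂ) + 1) * m0 / 5 + 2 / 5 * ((m0 - 5 * m1 - 3 * m5 : ℤ) : ℂ)
      + 1 / 5 * m5 = ((fh : ℂ) + 1) * m0 - 2 * m1 - m5 by push_cast; ring]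
  rw [show 1 + ((m0 : ℂ) - ((m0 - 5 * m1 - 3 * m5 : ℤ) : ℂ) - 3 * m5) / 5 = 1 + (m1 : ℂ) by
    push_cast; ring]
  rw [show 1 + ((m0 - 5 * m1 - 3 * m5 : ℤ) : ℂ) = 1 + (m0 : ℂ) - 5 * m1 - 3 * m5 by
    push_cast; ring]
  rw [show 1 + ((5 * fh + 2 : ℤ) : ℂ) / 5 * m0 - 2 / 5 * ((m0 - 5 * m1 - 3 * m5 : ℤ) : ℂ)
      - 1 / 5 * m5 = 1 + (fh : ℂ) * m0 + 2 * m1 + m5 by push_cast; ring]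
  ring

/-- Quantum McKay correspondence for disc potentials of `[ℂ³/ℤ₅(1,1,3)]`:
with `f̂ ≥ 1`, `f = 5·f̂ + 2`, positive Kähler parameters `q̂₀, q̂₁, q̂₅`, and the change of
variables `q₄ = q̂₁^(−1/5)`, `q₅ = q̂₁^(−3/5)·q̂₅`, `q₀ = q̂₁^(1/5)·q̂₀`, the tsum of the
orbifold superpotential terms over `orbIndexSet` equals `5` times the tsum of the
resolution superpotential terms over `resIndexSet`; i.e.
`W_f^{X,L}(q(q̂), q₀(q̂, q̂₀)) = 5·W_f̂^{X̂,L̂}(q̂, q̂₀)`. -/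
theorem quantum_McKay_disc_potential (fh : ℤ) (hfh : 1 ≤ fh) (f : ℤ)
    (hf : f = 5 * fh + 2) (qh0 qh1 qh5 : ℝ) (h0 : 0 < qh0) (h1 : 0 < qh1) (h5 : 0 < qh5) :
    (∑' p : orbIndexSet,
        orbSuperTerm f (qh1 ^ ((1 : ℝ) / 5) * qh0) (qh1 ^ (-(1 : ℝ) / 5))
          (qh1 ^ (-(3 : ℝ) / 5) * qh5) (p : ℤ × ℤ × ℤ).1 (p : ℤ × ℤ × ℤ).2.1
          (p : ℤ × ℤ × ℤ).2.2) =
      5 * ∑' p : resIndexSet,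
        resSuperTerm fh qh0 qh1 qh5 (p : ℤ × ℤ × ℤ).1 (p : ℤ × ℤ × ℤ).2.1
          (p : ℤ × ℤ × ℤ).2.2 := by
  subst hf
  rw [← Equiv.tsum_eq mckayEquiv (fun p : orbIndexSet =>
    orbSuperTerm (5 * fh + 2) (qh1 ^ ((1 : ℝ) / 5) * qh0) (qh1 ^ (-(1 : ℝ) / 5))
      (qh1 ^ (-(3 : ℝ) / 5) * qh5) (p : ℤ × ℤ × ℤ).1 (p : ℤ × ℤ × ℤ).2.1
      (p : ℤ × ℤ × ℤ).2.2), ← tsum_mul_left]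
  exact tsum_congr fun p =>
    orbSuperTerm_eq_five_mul_resSuperTerm fh (p : ℤ × ℤ × ℤ).1 (p : ℤ × ℤ × ℤ).2.1
      (p : ℤ × ℤ × ℤ).2.2 qh0 qh1 qh5 h1
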